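/- For any group G, the intersection Z(G) ∩ [G,G] of the center of G with the commutator subgroup of G is contained in Φ_f(G) (and hence also in Φ(G)). -/

import Mathlib

/-- `phiF G` is the intersection of all maximal subgroups of finite index in `G`
(equal to `G` itself, i.e. `⊤`, if there are no such subgroups). -/
def phiF (G : Type*) [Group G] : Subgroup G :=
  ⨅ M ∈ {M : Subgroup G | IsCoatom M ∧ M.FiniteIndex}, M

lemma center_inf_commutator_le_coatom {G : Type*} [Group G] {M : Subgroup G}
    (hM : IsCoatom M) : Subgroup.center G ⊓ commutator G ≤ M := by
  intro x hx
  obtain ⟨hxc, hxcomm⟩ := hx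
  by_contra hxM
  have hsup : M ⊔ Subgroup.zpowers x = ⊤ :=
    hM.2 _ (left_lt_sup.mpr fun h => hxM (h (Subgroup.mem_zpowers x)))
  haveI : M.Normal := by
    rw [← Subgroup.normalizer_eq_top_iff, eq_top_iff, ← hsup]
    exact sup_le Subgroup.le_normalizer
      (le_trans (Subgroup.zpowers_le.mpr hxc) (Subgroup.center_le_normalizer _))
  set φ := QuotientGroup.mk' M with hφ
  have htop : Subgroup.zpowers (φ x) = ⊤ := by
    have h1 : Subgroup.map φ ⊤ = ⊤ :=
      Subgroup.map_top_of_surjective φ (QuotientGroup.mk'_surjective M)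
    rw [← h1, ← hsup, Subgroup.map_sup]
    have h2 : Subgroup.map φ M = ⊥ := by
      rw [Subgroup.map_eq_bot_iff, QuotientGroup.ker_mk']
    rw [h2, MonoidHom.map_zpowers, bot_sup_eq]
  have hc : commutator G ≤ M := by
    rw [commutator_def, Subgroup.commutator_le]
    intro g _ h _
    rw [← QuotientGroup.eq_one_iff]
    open scoped commutatorElement in
    have : (↑(⁅g, h⁆ : G) : G ⧸ M) = ⁅φ g, φ h⁆ := map_commutatorElement φ g h
    rw [this, commutatorElement_eq_one_iff_commute]
    obtain ⟨a, ha⟩ : φ g ∈ Subgroup.zpowers (φ x) := htop ▸ Subgroup.mem_top _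
    obtain ⟨b, hb⟩ : φ h ∈ Subgroup.zpowers (φ x) := htop ▸ Subgroup.mem_top _
    rw [← ha, ← hb]
    exact (Commute.refl (φ x)).zpow_zpow a b
  exact hxM (hc hxcomm)

/-- For any group `G`, the intersection `Z(G) ∩ [G,G]` is
contained in `Φ_f(G)`, and also in the Frattini subgroup `Φ(G)`. -/
theorem center_inf_commutator_le_phiF {G : Type*} [Group G] :
    Subgroup.center G ⊓ commutator G ≤ phiF G ∧
      Subgroup.center G ⊓ commutator G ≤ frattini G := by
  constructor
  · exact le_iInf₂ fun M hM => center_inf_commutator_le_coatom hM.1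
  · exact le_iInf₂ fun M hM => center_inf_commutator_le_coatom hM
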